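/- Let 0 < a₁ < a₂ and, for integers n ≥ 1, define Δ_n = ((a₂²−a₁²)/(2a₂²) + 1/(2π a₂²) − 1/(2π a₁²) − 1/n)² − (1/n²)(a₁/a₂)^{2n} and Ω_n^± = ((a₂²−a₁²)/(4a₂²) + 1/(4π a₂²) + 1/(4π a₁²)) ± (1/2)√Δ_n. Then the set of all such values Ω_n^± (taken over all 0 < a₁ < a₂ and all n ≥ 1 with Δ_n > 0) is dense in the interval (0, ∞): for every c > 0 and every ε > 0, there exist 0 < a₁ < a₂ and an integer n ≥ 1 with Δ_n > 0 such that |Ω_n^+ − c| < ε or |Ω_n^− − c| < ε. -/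

import Mathlib

open Real Filter

noncomputable section

/-- The discriminant
`Δ_n = ((a₂²-a₁²)/(2a₂²) + 1/(2π a₂²) - 1/(2π a₁²) - 1/n)² - (1/n²)(a₁/a₂)^{2n}`. -/
def Δn (a₁ a₂ : ℝ) (n : ℕ) : ℝ :=
  ((a₂ ^ 2 - a₁ ^ 2) / (2 * a₂ ^ 2) + 1 / (2 * π * a₂ ^ 2)
      - 1 / (2 * π * a₁ ^ 2) - 1 / (n : ℝ)) ^ 2
    - (1 / (n : ℝ) ^ 2) * (a₁ / a₂) ^ (2 * n)

/-- The midpoint `(a₂²-a₁²)/(4a₂²) + 1/(4π a₂²) + 1/(4π a₁²)` of the two roots. -/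
def Ωmid (a₁ a₂ : ℝ) : ℝ :=
  (a₂ ^ 2 - a₁ ^ 2) / (4 * a₂ ^ 2) + 1 / (4 * π * a₂ ^ 2) + 1 / (4 * π * a₁ ^ 2)

/-- The angular velocity `Ω_n^+ = Ωmid + (1/2)√Δ_n`. -/
def Ωplus (a₁ a₂ : ℝ) (n : ℕ) : ℝ := Ωmid a₁ a₂ + (1 / 2) * Real.sqrt (Δn a₁ a₂ n)

/-- The angular velocity `Ω_n^- = Ωmid - (1/2)√Δ_n`. -/
def Ωminus (a₁ a₂ : ℝ) (n : ℕ) : ℝ := Ωmid a₁ a₂ - (1 / 2) * Real.sqrt (Δn a₁ a₂ n)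

lemma delta_eq (c' : ℝ) (hc' : 0 < c') (n : ℕ) :
    Δn (Real.sqrt (1/(2*π*c'))) (2 * Real.sqrt (1/(2*π*c'))) n
      = (3/8 - 3/4*c' - 1/(n:ℝ))^2 - (1/(n:ℝ)^2) * (1/2:ℝ)^(2*n) := by
  have hπ := Real.pi_pos
  have hx : (0:ℝ) < 1/(2*π*c') := by positivity
  have ha : 0 < Real.sqrt (1/(2*π*c')) := Real.sqrt_pos.2 hx
  set a := Real.sqrt (1/(2*π*c')) with ha_def
  have hsq : a ^ 2 = 1/(2*π*c') := Real.sq_sqrt hx.le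
  have h2 : a / (2*a) = 1/2 := by field_simp
  unfold Δn
  rw [h2, mul_pow, hsq]
  have hπ' : π ≠ 0 := hπ.ne'
  have hc'' : c' ≠ 0 := hc'.ne'
  congr 1
  congr 1
  field_simp
  ring

lemma mid_eq (c' : ℝ) (hc' : 0 < c') :
    Ωmid (Real.sqrt (1/(2*π*c'))) (2 * Real.sqrt (1/(2*π*c')))
      = 3/16 + 5/8*c' := by
  have hπ := Real.pi_pos
  have hx : (0:ℝ) < 1/(2*π*c') := by positivity
  have hsq : (Real.sqrt (1/(2*π*c'))) ^ 2 = 1/(2*π*c') := Real.sq_sqrt hx.le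
  unfold Ωmid
  rw [mul_pow, hsq]
  have hπ' : π ≠ 0 := hπ.ne'
  have hc'' : c' ≠ 0 := hc'.ne'
  field_simp
  ring

lemma key (c' c ε : ℝ) (hc' : 0 < c') (hne : c' ≠ 1/2) (hd : |c' - c| < ε) :
    ∃ (a₁ a₂ : ℝ) (n : ℕ), 0 < a₁ ∧ a₁ < a₂ ∧ 1 ≤ n ∧ 0 < Δn a₁ a₂ n ∧
      (|Ωplus a₁ a₂ n - c| < ε ∨ |Ωminus a₁ a₂ n - c| < ε) := by
  have hπ := Real.pi_pos
  have hx : (0:ℝ) < 1/(2*π*c') := by positivity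
  set a := Real.sqrt (1/(2*π*c')) with ha_def
  have ha : 0 < a := Real.sqrt_pos.2 hx
  set K : ℝ := 3/8 - 3/4*c' with hK_def
  have hK : K ≠ 0 := by
    intro h
    rw [hK_def] at h
    exact hne (by linarith)
  -- limit of Δn
  have t1 : Tendsto (fun n : ℕ => (1:ℝ)/n) atTop (nhds 0) :=
    tendsto_one_div_atTop_nhds_zero_nat
  have t2 : Tendsto (fun n : ℕ => (K - 1/(n:ℝ))^2) atTop (nhds (K^2)) := by
    have := ((tendsto_const_nhds (x := K)).sub t1).pow 2
    simpa using this
  have t3 : Tendsto (fun n : ℕ => (1/(n:ℝ)^2) * (1/2:ℝ)^(2*n)) atTop (nhds 0) := by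
    have h1 : Tendsto (fun n : ℕ => (1:ℝ)/(n:ℝ)^2) atTop (nhds 0) := by
      have := t1.pow 2
      simp only [div_pow, one_pow] at this
      simpa using this
    have h2 : Tendsto (fun n : ℕ => ((1:ℝ)/2)^(2*n)) atTop (nhds 0) := by
      have hb : Tendsto (fun m : ℕ => ((1:ℝ)/4)^m) atTop (nhds 0) :=
        tendsto_pow_atTop_nhds_zero_of_lt_one (by norm_num) (by norm_num)
      refine hb.congr fun n => ?_
      rw [pow_mul]; norm_num
    simpa using h1.mul h2
  have hΔt : Tendsto (fun n : ℕ => Δn a (2*a) n) atTop (nhds (K^2)) := by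
    have : Tendsto (fun n : ℕ => (K - 1/(n:ℝ))^2 - (1/(n:ℝ)^2) * (1/2:ℝ)^(2*n))
        atTop (nhds (K^2 - 0)) := t2.sub t3
    simp only [sub_zero] at this
    refine this.congr fun n => ?_
    rw [delta_eq c' hc' n]
  have hΔpos : ∀ᶠ n : ℕ in atTop, 0 < Δn a (2*a) n :=
    hΔt.eventually_const_lt (by positivity)
  have hsqrt : Tendsto (fun n : ℕ => Real.sqrt (Δn a (2*a) n)) atTop (nhds |K|) := by
    have := (Real.continuous_sqrt.tendsto (K^2)).comp hΔt
    simpa [Real.sqrt_sq_eq_abs, Function.comp_def] using this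
  have hmid : Ωmid a (2*a) = 3/16 + 5/8*c' := mid_eq c' hc'
  -- choose sign
  rcases lt_or_gt_of_ne hK with hKneg | hKpos
  · -- K < 0 : use Ωplus → Ωmid + |K|/2 = Ωmid - K/2 = c'
    have habs : |K| = -K := abs_of_neg hKneg
    have hΩ : Tendsto (fun n : ℕ => Ωplus a (2*a) n) atTop (nhds c') := by
      have := (tendsto_const_nhds (x := Ωmid a (2*a))).add (hsqrt.const_mul (1/2))
      have heq : Ωmid a (2*a) + 1/2 * |K| = c' := by
        rw [habs, hmid, hK_def]; ring
      rw [heq] at this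
      refine this.congr fun n => ?_
      simp [Ωplus]
    have hev : ∀ᶠ n : ℕ in atTop, |Ωplus a (2*a) n - c| < ε := by
      have : Tendsto (fun n : ℕ => |Ωplus a (2*a) n - c|) atTop (nhds |c' - c|) :=
        ((hΩ.sub_const c).abs)
      exact this.eventually_lt_const hd
    obtain ⟨n, hn1⟩ := ((eventually_ge_atTop 1).and (hΔpos.and hev)).exists
    exact ⟨a, 2*a, n, ha, by linarith, hn1.1, hn1.2.1, Or.inl hn1.2.2⟩
  · have habs : |K| = K := abs_of_pos hKpos
    have hΩ : Tendsto (fun n : ℕ => Ωminus a (2*a) n) atTop (nhds c') := by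
      have := (tendsto_const_nhds (x := Ωmid a (2*a))).sub (hsqrt.const_mul (1/2))
      have heq : Ωmid a (2*a) - 1/2 * |K| = c' := by
        rw [habs, hmid, hK_def]; ring
      rw [heq] at this
      refine this.congr fun n => ?_
      simp [Ωminus]
    have hev : ∀ᶠ n : ℕ in atTop, |Ωminus a (2*a) n - c| < ε := by
      have : Tendsto (fun n : ℕ => |Ωminus a (2*a) n - c|) atTop (nhds |c' - c|) :=
        ((hΩ.sub_const c).abs)
      exact this.eventually_lt_const hd
    obtain ⟨n, hn1⟩ := ((eventually_ge_atTop 1).and (hΔpos.and hev)).exists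
    exact ⟨a, 2*a, n, ha, by linarith, hn1.1, hn1.2.1, Or.inr hn1.2.2⟩

theorem bifurcation_angular_velocities_dense :
    ∀ c : ℝ, 0 < c → ∀ ε : ℝ, 0 < ε →
      ∃ (a₁ a₂ : ℝ) (n : ℕ), 0 < a₁ ∧ a₁ < a₂ ∧ 1 ≤ n ∧ 0 < Δn a₁ a₂ n ∧
        (|Ωplus a₁ a₂ n - c| < ε ∨ |Ωminus a₁ a₂ n - c| < ε) := by
  intro c hc ε hε
  by_cases h : c = 1/2
  · refine key (c + min ε 1 / 4) c ε (by positivity) ?_ ?_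
    · have : 0 < min ε 1 := lt_min hε one_pos
      intro heq; rw [h] at heq; linarith
    · have h1 : 0 < min ε 1 := lt_min hε one_pos
      have h2 : min ε 1 ≤ ε := min_le_left _ _
      rw [abs_of_pos (by linarith : (0:ℝ) < c + min ε 1 / 4 - c)]
      linarith
  · exact key c c ε hc h (by simpa using hε)
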